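/- Let Ω ⊂ ℂ be a bounded open set, F : 𝔻 → ℂ an injective holomorphic map with F(𝔻) = Ω, g : [0,1] → ℝ continuous with g(0) = 0, and define H on the closed unit disk by H(z) = g(|z|)·z/|z| for z ≠ 0, H(0) = 0. For ζ in the closed unit disk and z ∈ 𝔻 set M_ζ(z) = (z + ζ)/(1 + z·conj(ζ)). If v₁ : Ω → ℝ is integrable, then the function V(ζ) = ∫_Ω H(M_ζ(F⁻¹(x))) v₁(x) dA(x) is well defined and continuous on the closed unit disk, and for every ζ with |ζ| = 1 one has V(ζ) = g(1)·ζ·∫_Ω v₁ dA. -/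

import Mathlib

open MeasureTheory Metric Set

lemma mobius_denom_ne (ζ z : ℂ) (hζ : ‖ζ‖ ≤ 1) (hz : ‖z‖ < 1) :
    1 + z * (starRingEnd ℂ) ζ ≠ 0 := by
  intro h
  have h1 : ‖z * (starRingEnd ℂ) ζ‖ < 1 := by
    rw [norm_mul, Complex.norm_conj]
    nlinarith [norm_nonneg z, norm_nonneg ζ]
  have : z * (starRingEnd ℂ) ζ = -1 := by linear_combination h
  rw [this] at h1; simp at h1

lemma mobius_abs_le (ζ z : ℂ) (hζ : ‖ζ‖ ≤ 1) (hz : ‖z‖ < 1) :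
    ‖(z + ζ) / (1 + z * (starRingEnd ℂ) ζ)‖ ≤ 1 := by
  have hd := mobius_denom_ne ζ z hζ hz
  have h0 : 0 < ‖1 + z * (starRingEnd ℂ) ζ‖ := by
    simpa using hd
  rw [norm_div, div_le_one h0]
  have key : Complex.normSq (z + ζ) ≤ Complex.normSq (1 + z * (starRingEnd ℂ) ζ) := by
    have h1 : Complex.normSq z < 1 := by
      rw [← Complex.sq_norm]; nlinarith [norm_nonneg z]
    have h2 : Complex.normSq ζ ≤ 1 := by
      rw [← Complex.sq_norm]; nlinarith [norm_nonneg ζ]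
    simp only [Complex.normSq_apply, Complex.add_re, Complex.add_im, Complex.one_re,
      Complex.one_im, Complex.mul_re, Complex.mul_im, Complex.conj_re, Complex.conj_im] at *
    nlinarith [sq_nonneg (z.re*ζ.re + z.im*ζ.im), sq_nonneg (z.re*ζ.im - z.im*ζ.re)]
  rw [Complex.normSq_eq_norm_sq, Complex.normSq_eq_norm_sq] at key
  exact (sq_le_sq₀ (norm_nonneg _) (norm_nonneg _)).1 key

section
variable (g : ℝ → ℝ) (hg : ContinuousOn g (Icc (0:ℝ) 1)) (hg0 : g 0 = 0)
    (H : ℂ → ℂ)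
    (hH : ∀ z : ℂ, z ≠ 0 → H z = (g (‖z‖) : ℂ) * z / (‖z‖ : ℂ))
    (hH0 : H 0 = 0)

include hH hH0 hg0 in
lemma normH : ∀ w : ℂ, ‖H w‖ = |g (‖w‖)| := by
  intro w
  rcases eq_or_ne w 0 with rfl | hw
  · simp [hH0, hg0]
  · rw [hH w hw, norm_div, norm_mul, Complex.norm_real, Complex.norm_real, Real.norm_eq_abs,
      Real.norm_eq_abs, abs_of_nonneg (norm_nonneg w), mul_div_assoc,
      div_self (norm_ne_zero_iff.mpr hw), mul_one]

include hg hg0 hH hH0 in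
lemma Hcont : ContinuousOn H (closedBall (0:ℂ) 1) := by
  have habs : ∀ w : ℂ, w ∈ closedBall (0:ℂ) 1 → ‖w‖ ∈ Icc (0:ℝ) 1 := by
    intro w hw
    simp only [mem_closedBall, Complex.dist_eq, sub_zero] at hw
    exact ⟨norm_nonneg w, hw⟩
  have hgabs : ContinuousOn (fun w : ℂ => g (‖w‖)) (closedBall (0:ℂ) 1) :=
    hg.comp continuous_norm.continuousOn habs
  intro w hw
  rcases eq_or_ne w 0 with rfl | hw0
  · rw [ContinuousWithinAt, hH0, tendsto_zero_iff_norm_tendsto_zero]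
    have h1 : Filter.Tendsto (fun v : ℂ => |g (‖v‖)|)
        (nhdsWithin 0 (closedBall (0:ℂ) 1)) (nhds 0) := by
      have := ((hgabs 0 (by simp)).tendsto).abs
      simpa [hg0] using this
    exact h1.congr fun v => by rw [← normH g hg0 H hH hH0 v]
  · have hev : ∀ᶠ v in nhdsWithin w (closedBall (0:ℂ) 1),
        H v = (g (‖v‖) : ℂ) * v / (‖v‖ : ℂ) := by
      filter_upwards [eventually_nhdsWithin_of_eventually_nhds
        (eventually_ne_nhds hw0)] with v hv using hH v hv
    have hwne : (‖w‖ : ℂ) ≠ 0 := by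
      simpa using norm_ne_zero_iff.mpr hw0
    refine ContinuousWithinAt.congr_of_eventuallyEq ?_ hev (hH w hw0)
    exact ContinuousWithinAt.div
      (((Complex.continuous_ofReal.comp_continuousOn hgabs).mul continuousOn_id) w hw)
      ((Complex.continuous_ofReal.comp continuous_norm).continuousWithinAt) hwne
end

lemma invcont (Ω : Set ℂ)
    (F : ℂ → ℂ) (hFhol : DifferentiableOn ℂ F (ball (0:ℂ) 1))
    (hFinj : InjOn F (ball (0:ℂ) 1)) (hFim : F '' (ball (0:ℂ) 1) = Ω) :
    ContinuousOn (Function.invFunOn F (ball (0:ℂ) 1)) Ω := by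
  set s : Set ℂ := ball (0:ℂ) 1
  set G := Function.invFunOn F s with hG
  have hAn : AnalyticOnNhd ℂ F s := hFhol.analyticOnNhd isOpen_ball
  have hopen : ∀ t ⊆ s, IsOpen t → IsOpen (F '' t) := by
    rcases hAn.is_constant_or_isOpen (convex_ball 0 1).isPreconnected with ⟨w, hw⟩ | h
    · exfalso
      have h0 : (0:ℂ) ∈ s := by simp [s]
      have h2 : (1/2 : ℂ) ∈ s := by
        simp only [s, mem_ball, Complex.dist_eq, sub_zero]
        norm_num
      have := hFinj h0 h2 (by rw [hw 0 h0, hw _ h2])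
      norm_num at this
    · exact h
  rw [_root_.continuousOn_iff']
  intro U hU
  refine ⟨F '' (U ∩ s), hopen _ inter_subset_right (hU.inter isOpen_ball), ?_⟩
  ext x
  simp only [mem_inter_iff, mem_preimage]
  constructor
  · rintro ⟨hxU, hxΩ⟩
    have hx : x ∈ F '' s := hFim ▸ hxΩ
    have hmem : G x ∈ s := Function.invFunOn_mem hx
    have hfx : F (G x) = x := Function.invFunOn_eq hx
    exact ⟨⟨G x, ⟨hxU, hmem⟩, hfx⟩, hxΩ⟩
  · rintro ⟨⟨z, ⟨hzU, hzs⟩, rfl⟩, hxΩ⟩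
    have hx : F z ∈ F '' s := ⟨z, hzs, rfl⟩
    have hmem : G (F z) ∈ s := Function.invFunOn_mem hx
    have hfx : F (G (F z)) = F z := Function.invFunOn_eq hx
    have : G (F z) = z := hFinj hmem hzs hfx
    rw [this]; exact ⟨hzU, hxΩ⟩

/-- The vector field `V(ζ) = ∫_Ω H(M_ζ(F⁻¹ x)) v₁(x) dA(x)` is
continuous on the closed unit disk, and on the unit circle it equals
`g(1) · ζ · ∫_Ω v₁`. -/
theorem vector_field_continuous_and_boundary
    (Ω : Set ℂ) (hΩopen : IsOpen Ω) (hΩbdd : Bornology.IsBounded Ω)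
    (F : ℂ → ℂ) (hFhol : DifferentiableOn ℂ F (ball (0:ℂ) 1))
    (hFinj : InjOn F (ball (0:ℂ) 1)) (hFim : F '' (ball (0:ℂ) 1) = Ω)
    (g : ℝ → ℝ) (hg : ContinuousOn g (Icc (0:ℝ) 1)) (hg0 : g 0 = 0)
    (H : ℂ → ℂ)
    (hH : ∀ z : ℂ, z ≠ 0 → H z = (g (‖z‖) : ℂ) * z / (‖z‖ : ℂ))
    (hH0 : H 0 = 0)
    (M : ℂ → ℂ → ℂ)
    (hM : ∀ ζ z : ℂ, M ζ z = (z + ζ) / (1 + z * (starRingEnd ℂ) ζ))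
    (v₁ : ℂ → ℝ) (hv₁ : IntegrableOn v₁ Ω volume)
    (V : ℂ → ℂ)
    (hV : ∀ ζ : ℂ, V ζ =
      ∫ x in Ω, H (M ζ (Function.invFunOn F (ball (0:ℂ) 1) x)) * (v₁ x : ℂ)) :
    ContinuousOn V (closedBall (0:ℂ) 1) ∧
      ∀ ζ : ℂ, ‖ζ‖ = 1 →
        V ζ = (g 1 : ℂ) * ζ * ((∫ x in Ω, v₁ x : ℝ) : ℂ) := by
  set s : Set ℂ := ball (0:ℂ) 1 with hs
  set G := Function.invFunOn F s with hGdef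
  have hGmem : ∀ x ∈ Ω, G x ∈ s := by
    intro x hx
    exact Function.invFunOn_mem (show x ∈ F '' s by rw [hFim]; exact hx)
  have hGlt : ∀ x ∈ Ω, ‖G x‖ < 1 := by
    intro x hx
    have := hGmem x hx
    simpa [s, mem_ball, Complex.dist_eq] using this
  have hζle : ∀ ζ ∈ closedBall (0:ℂ) 1, ‖ζ‖ ≤ 1 := by
    intro ζ hζ
    simpa [mem_closedBall, Complex.dist_eq] using hζ
  have hMball : ∀ ζ, ‖ζ‖ ≤ 1 → ∀ z : ℂ, ‖z‖ < 1 →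
      M ζ z ∈ closedBall (0:ℂ) 1 := by
    intro ζ hζ z hz
    rw [mem_closedBall, Complex.dist_eq, sub_zero, hM]
    exact mobius_abs_le ζ z hζ hz
  have hHc : ContinuousOn H (closedBall (0:ℂ) 1) := Hcont g hg hg0 H hH hH0
  have hGc : ContinuousOn G Ω := invcont Ω F hFhol hFinj hFim
  constructor
  · -- continuity
    have hVfun : V = fun ζ => ∫ x in Ω, H (M ζ (G x)) * (v₁ x : ℂ) := funext hV
    intro ζ₀ hζ₀
    rw [hVfun]
    obtain ⟨C, hC⟩ := isCompact_Icc.exists_bound_of_continuousOn hg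
    apply continuousWithinAt_of_dominated (bound := fun x => C * |v₁ x|)
    · -- measurability
      refine eventually_nhdsWithin_of_forall (fun ζ hζ => ?_)
      have hcont : ContinuousOn (fun x => H (M ζ (G x))) Ω := by
        have hMz : ContinuousOn (fun z => M ζ z) s := by
          have : (fun z => M ζ z) = fun z => (z + ζ) / (1 + z * (starRingEnd ℂ) ζ) :=
            funext fun z => hM ζ z
          rw [this]
          refine ContinuousOn.div (by fun_prop) (by fun_prop) ?_
          intro z hz
          exact mobius_denom_ne ζ z (hζle ζ hζ) (by simpa [s, mem_ball, Complex.dist_eq] using hz)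
        exact hHc.comp (hMz.comp hGc hGmem)
          (fun x hx => hMball ζ (hζle ζ hζ) (G x) (hGlt x hx))
      exact (hcont.aestronglyMeasurable hΩopen.measurableSet).mul
        (Complex.continuous_ofReal.comp_aestronglyMeasurable hv₁.aestronglyMeasurable)
    · -- bound
      refine eventually_nhdsWithin_of_forall (fun ζ hζ => ?_)
      filter_upwards [ae_restrict_mem hΩopen.measurableSet] with x hx
      rw [norm_mul, Complex.norm_real, Real.norm_eq_abs]
      have hwle : ‖M ζ (G x)‖ ≤ 1 := by
        have := hMball ζ (hζle ζ hζ) (G x) (hGlt x hx)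
        simpa [mem_closedBall, Complex.dist_eq] using this
      have : ‖H (M ζ (G x))‖ ≤ C := by
        rw [normH g hg0 H hH hH0]
        have := hC (‖M ζ (G x)‖) ⟨norm_nonneg _, hwle⟩
        simpa [Real.norm_eq_abs] using this
      exact mul_le_mul_of_nonneg_right this (abs_nonneg _)
    · exact hv₁.norm.const_mul C
    · -- continuity in ζ a.e.
      filter_upwards [ae_restrict_mem hΩopen.measurableSet] with x hx
      have hMζ : ContinuousOn (fun ζ => M ζ (G x)) (closedBall (0:ℂ) 1) := by
        have : (fun ζ => M ζ (G x))
            = fun ζ => (G x + ζ) / (1 + G x * (starRingEnd ℂ) ζ) :=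
          funext fun ζ => hM ζ (G x)
        rw [this]
        refine ContinuousOn.div (by fun_prop)
          ((continuous_const.add (continuous_const.mul Complex.continuous_conj)).continuousOn) ?_
        intro ζ hζ
        exact mobius_denom_ne ζ (G x) (hζle ζ hζ) (hGlt x hx)
      exact ContinuousWithinAt.mul
        ((hHc.comp hMζ (fun ζ hζ => hMball ζ (hζle ζ hζ) (G x) (hGlt x hx))) ζ₀ hζ₀)
        continuousWithinAt_const
  · -- boundary value
    intro ζ hζ
    rw [hV]
    have hζle' : ‖ζ‖ ≤ 1 := hζ.le
    have hζne : ζ ≠ 0 := by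
      intro h; rw [h] at hζ; simp at hζ
    have key : EqOn (fun x => H (M ζ (G x)) * (v₁ x : ℂ))
        (fun x => (g 1 : ℂ) * ζ * (v₁ x : ℂ)) Ω := by
      intro x hx
      have hzlt := hGlt x hx
      have hd := mobius_denom_ne ζ (G x) hζle' hzlt
      have hMeq : M ζ (G x) = ζ := by
        rw [hM]
        have hcc : ζ * (starRingEnd ℂ) ζ = 1 := by
          rw [Complex.mul_conj]
          norm_cast
          rw [Complex.normSq_eq_norm_sq, hζ]; norm_num
        rw [div_eq_iff hd]
        linear_combination (-(G x)) * hcc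
      simp only
      rw [hMeq, hH ζ hζne, hζ]
      norm_num
    rw [setIntegral_congr_fun hΩopen.measurableSet key, integral_const_mul]
    congr 1
    exact integral_ofReal
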